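/- Let X and Y be Polish spaces, μ a Borel probability measure on X, ν a Borel probability measure on Y, and c : X × Y → [0, +∞] a lower semicontinuous cost function. Then the infimum of ∫_{X×Y} c dπ over all π in Π(μ,ν) (the set of Borel probability measures on X × Y with first marginal μ and second marginal ν) is attained: there exists π* ∈ Π(μ,ν) with ∫ c dπ* = inf_{π ∈ Π(μ,ν)} ∫ c dπ. -/

import Mathlib

set_option maxHeartbeats 1000000

open MeasureTheory
open scoped ENNReal

namespace OTAux

open Filter Topology Set TopologicalSpace

noncomputable section

variable {Z : Type*} [TopologicalSpace Z] [PolishSpace Z] [MeasurableSpace Z] [BorelSpace Z]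

/-- **Ulam tightness**: a probability measure on a Polish space is tight. -/
lemma exists_compact_compl_le (m : Measure Z) [IsProbabilityMeasure m]
    {ε : ℝ≥0∞} (hε : ε ≠ 0) : ∃ K : Set Z, IsCompact K ∧ m Kᶜ ≤ ε := by
  letI := upgradeIsCompletelyMetrizable Z
  rcases isEmpty_or_nonempty Z with hZ | hZ
  · refine ⟨∅, isCompact_empty, ?_⟩
    have : (∅ᶜ : Set Z) = ∅ := by
      simp [Set.univ_eq_empty_iff.mpr hZ]
    simp [this]
  · obtain ⟨u, hu⟩ := TopologicalSpace.exists_dense_seq Z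
    have hcover : ∀ n : ℕ, (⋃ k, Metric.ball (u k) (1 / ((n : ℝ) + 1))) = univ := by
      intro n
      ext x
      simp only [mem_iUnion, mem_univ, iff_true]
      rcases Metric.denseRange_iff.mp hu x (1 / ((n : ℝ) + 1)) (by positivity) with ⟨k, hk⟩
      exact ⟨k, by simpa [Metric.mem_ball, dist_comm] using hk⟩
    have key : ∀ n : ℕ, ∃ N : ℕ,
        m (⋃ k ∈ Finset.range N, Metric.ball (u k) (1 / ((n : ℝ) + 1)))ᶜ ≤ ε * 2⁻¹ ^ (n + 1) := by
      intro n
      set B : ℕ → Set Z := fun N => ⋃ k ∈ Finset.range N, Metric.ball (u k) (1 / ((n : ℝ) + 1))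
        with hB
      have hBmeas : ∀ N, MeasurableSet (B N) := by
        intro N
        exact (isOpen_biUnion fun k _ => Metric.isOpen_ball).measurableSet
      have hmono : Monotone B := by
        intro N M hNM
        exact Set.biUnion_subset_biUnion_left (Finset.range_subset_range.mpr hNM)
      have hU : (⋃ N, B N) = univ := by
        rw [← hcover n]
        apply subset_antisymm
        · exact Set.iUnion_subset fun N =>
            Set.iUnion₂_subset fun k _ =>
              Set.subset_iUnion (fun j => Metric.ball (u j) (1 / ((n : ℝ) + 1))) k
        · intro x hx
          rcases mem_iUnion.mp hx with ⟨k, hk⟩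
          exact mem_iUnion.mpr ⟨k + 1, mem_iUnion₂.mpr ⟨k, by simp, hk⟩⟩
      set δ : ℝ≥0∞ := ε * 2⁻¹ ^ (n + 1) with hδ
      have hδ0 : δ ≠ 0 := by
        simp only [hδ, ne_eq, mul_eq_zero, not_or]
        exact ⟨hε, pow_ne_zero _ (ENNReal.inv_ne_zero.mpr ENNReal.ofNat_ne_top)⟩
      by_cases hbig : (1 : ℝ≥0∞) ≤ δ
      · exact ⟨0, le_trans prob_le_one hbig⟩
      · have hlt : (1 : ℝ≥0∞) - δ < ⨆ N, m (B N) := by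
          rw [← hmono.measure_iUnion, hU, measure_univ]
          exact ENNReal.sub_lt_self ENNReal.one_ne_top one_ne_zero hδ0
        obtain ⟨N, hN⟩ := lt_iSup_iff.mp hlt
        refine ⟨N, ?_⟩
        rw [measure_compl (hBmeas N) (measure_ne_top _ _), measure_univ]
        rw [tsub_le_iff_right]
        calc (1 : ℝ≥0∞) = (1 - δ) + δ := (tsub_add_cancel_of_le (le_of_not_ge hbig)).symm
          _ ≤ m (B N) + δ := add_le_add_left hN.le _
          _ = δ + m (B N) := add_comm _ _
    choose N hN using key
    set S : Set Z := ⋂ n, ⋃ k ∈ Finset.range (N n), Metric.ball (u k) (1 / ((n : ℝ) + 1)) with hS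
    refine ⟨closure S, ?_, ?_⟩
    · refine TotallyBounded.isCompact_of_isClosed ?_ isClosed_closure
      refine TotallyBounded.closure ?_
      rw [Metric.totallyBounded_iff]
      intro δ hδ
      obtain ⟨n, hn⟩ := exists_nat_one_div_lt hδ
      refine ⟨u '' ↑(Finset.range (N n)), ((Finset.range (N n)).finite_toSet).image u, ?_⟩
      have h1 : S ⊆ ⋃ k ∈ Finset.range (N n), Metric.ball (u k) (1 / ((n : ℝ) + 1)) :=
        Set.iInter_subset _ n
      refine h1.trans ?_
      rw [Set.biUnion_image]
      exact Set.iUnion₂_mono fun k _ => Metric.ball_subset_ball hn.le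
    · calc m (closure S)ᶜ ≤ m Sᶜ :=
            measure_mono (compl_subset_compl.mpr subset_closure)
        _ = m (⋃ n, (⋃ k ∈ Finset.range (N n), Metric.ball (u k) (1 / ((n : ℝ) + 1)))ᶜ) := by
            rw [hS, compl_iInter]
        _ ≤ ∑' n, m (⋃ k ∈ Finset.range (N n), Metric.ball (u k) (1 / ((n : ℝ) + 1)))ᶜ :=
            measure_iUnion_le _
        _ ≤ ∑' n, ε * 2⁻¹ ^ (n + 1) := ENNReal.tsum_le_tsum hN
        _ = ε * ∑' n, (2⁻¹ : ℝ≥0∞) ^ (n + 1) := ENNReal.tsum_mul_left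
        _ = ε := by
            rw [ENNReal.tsum_geometric_add_one, ENNReal.one_sub_inv_two, inv_inv,
              ENNReal.inv_mul_cancel two_ne_zero ENNReal.ofNat_ne_top, mul_one]

section Lim

variable (𝒰 : Ultrafilter ℕ)

/-- The limit of a `ℝ≥0∞`-valued sequence along an ultrafilter. -/
def lim' (a : ℕ → ℝ≥0∞) : ℝ≥0∞ := (𝒰.map a).lim

lemma tendsto_lim' (a : ℕ → ℝ≥0∞) : Tendsto a ↑𝒰 (𝓝 (lim' 𝒰 a)) := by
  have := Ultrafilter.le_nhds_lim (𝒰.map a)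
  rwa [Ultrafilter.coe_map] at this

lemma lim'_le_lim' {a b : ℕ → ℝ≥0∞} (h : ∀ n, a n ≤ b n) : lim' 𝒰 a ≤ lim' 𝒰 b :=
  le_of_tendsto_of_tendsto' (tendsto_lim' 𝒰 a) (tendsto_lim' 𝒰 b) h

lemma lim'_const (x : ℝ≥0∞) : lim' 𝒰 (fun _ => x) = x :=
  tendsto_nhds_unique (tendsto_lim' 𝒰 _) tendsto_const_nhds

lemma lim'_le_of_eventually {a : ℕ → ℝ≥0∞} {x : ℝ≥0∞} (h : ∀ᶠ n in ↑𝒰, a n ≤ x) :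
    lim' 𝒰 a ≤ x :=
  le_of_tendsto (tendsto_lim' 𝒰 a) h

lemma lim'_le {a : ℕ → ℝ≥0∞} {x : ℝ≥0∞} (h : ∀ n, a n ≤ x) : lim' 𝒰 a ≤ x :=
  lim'_le_of_eventually 𝒰 (Eventually.of_forall h)

lemma le_lim' {a : ℕ → ℝ≥0∞} {x : ℝ≥0∞} (h : ∀ n, x ≤ a n) : x ≤ lim' 𝒰 a :=
  ge_of_tendsto (tendsto_lim' 𝒰 a) (Eventually.of_forall h)

lemma lim'_add (a b : ℕ → ℝ≥0∞) :
    lim' 𝒰 (fun n => a n + b n) = lim' 𝒰 a + lim' 𝒰 b :=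
  tendsto_nhds_unique (tendsto_lim' 𝒰 _) ((tendsto_lim' 𝒰 a).add (tendsto_lim' 𝒰 b))

lemma lim'_const_mul {d : ℝ≥0∞} (hd : d ≠ ∞) (a : ℕ → ℝ≥0∞) :
    lim' 𝒰 (fun n => d * a n) = d * lim' 𝒰 a :=
  tendsto_nhds_unique (tendsto_lim' 𝒰 _)
    (ENNReal.Tendsto.const_mul (tendsto_lim' 𝒰 a) (Or.inr hd))

end Lim

section Content

variable (𝒰 : Ultrafilter ℕ) (π : ℕ → Measure Z)

/-- Candidate content: infimum over open neighborhoods of the ultrafilter limit. -/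
def lamE (K : Compacts Z) : ℝ≥0∞ :=
  ⨅ (U : Opens Z) (_ : (K : Set Z) ⊆ (U : Set Z)), lim' 𝒰 (fun n => π n (U : Set Z))

lemma lamE_le {K : Compacts Z} {U : Opens Z} (h : (K : Set Z) ⊆ (U : Set Z)) :
    lamE 𝒰 π K ≤ lim' 𝒰 (fun n => π n (U : Set Z)) :=
  iInf₂_le U h

lemma le_lamE {K : Compacts Z} {r : ℝ≥0∞} (h : ∀ n, r ≤ π n (K : Set Z)) :
    r ≤ lamE 𝒰 π K :=
  le_iInf₂ fun _U hU => le_lim' 𝒰 fun n => (h n).trans (measure_mono hU)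

variable (hπ : ∀ n, IsProbabilityMeasure (π n))
include hπ

lemma lamE_le_one (K : Compacts Z) : lamE 𝒰 π K ≤ 1 := by
  refine (lamE_le 𝒰 π (U := ⊤) (by simp)).trans ?_
  have : ∀ n, π n ((⊤ : Opens Z) : Set Z) = 1 := fun n => by
    simpa using (hπ n).measure_univ
  simp only [this]
  exact (lim'_const 𝒰 1).le

lemma lamE_ne_top (K : Compacts Z) : lamE 𝒰 π K ≠ ∞ :=
  ((lamE_le_one 𝒰 π hπ K).trans_lt ENNReal.one_lt_top).ne

lemma lamE_mono {K₁ K₂ : Compacts Z} (h : (K₁ : Set Z) ⊆ (K₂ : Set Z)) :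
    lamE 𝒰 π K₁ ≤ lamE 𝒰 π K₂ :=
  le_iInf₂ fun U hU => lamE_le 𝒰 π (h.trans hU)

lemma lamE_sup_le (K₁ K₂ : Compacts Z) :
    lamE 𝒰 π (K₁ ⊔ K₂) ≤ lamE 𝒰 π K₁ + lamE 𝒰 π K₂ := by
  refine ENNReal.le_of_forall_pos_le_add fun ε hε hfin => ?_
  have hε2 : ((ε : ℝ≥0∞) / 2) ≠ 0 := by
    simp [ENNReal.div_eq_zero_iff, hε.ne']
  have h1 : lamE 𝒰 π K₁ < lamE 𝒰 π K₁ + ε / 2 :=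
    ENNReal.lt_add_right (lamE_ne_top 𝒰 π hπ K₁) hε2
  have h2 : lamE 𝒰 π K₂ < lamE 𝒰 π K₂ + ε / 2 :=
    ENNReal.lt_add_right (lamE_ne_top 𝒰 π hπ K₂) hε2
  simp only [lamE, iInf_lt_iff] at h1 h2
  obtain ⟨U₁, hKU₁, hlt₁⟩ := h1
  obtain ⟨U₂, hKU₂, hlt₂⟩ := h2
  have hsub : ((K₁ ⊔ K₂ : Compacts Z) : Set Z) ⊆ ((U₁ ⊔ U₂ : Opens Z) : Set Z) := by
    simp only [Compacts.coe_sup, Opens.coe_sup]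
    exact Set.union_subset_union hKU₁ hKU₂
  calc lamE 𝒰 π (K₁ ⊔ K₂) ≤ lim' 𝒰 (fun n => π n ((U₁ ⊔ U₂ : Opens Z) : Set Z)) :=
        lamE_le 𝒰 π hsub
    _ ≤ lim' 𝒰 (fun n => π n (U₁ : Set Z) + π n (U₂ : Set Z)) := by
        refine lim'_le_lim' 𝒰 fun n => ?_
        simpa only [Opens.coe_sup] using measure_union_le (μ := π n) (U₁ : Set Z) U₂
    _ = lim' 𝒰 (fun n => π n (U₁ : Set Z)) + lim' 𝒰 (fun n => π n (U₂ : Set Z)) :=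
        lim'_add 𝒰 _ _
    _ ≤ (lamE 𝒰 π K₁ + ε / 2) + (lamE 𝒰 π K₂ + ε / 2) := add_le_add hlt₁.le hlt₂.le
    _ = lamE 𝒰 π K₁ + lamE 𝒰 π K₂ + ε := by
        rw [add_add_add_comm, ENNReal.add_halves]

lemma le_lamE_sup_of_disjoint (K₁ K₂ : Compacts Z)
    (hd : Disjoint (K₁ : Set Z) (K₂ : Set Z)) :
    lamE 𝒰 π K₁ + lamE 𝒰 π K₂ ≤ lamE 𝒰 π (K₁ ⊔ K₂) := by
  obtain ⟨V₁, V₂, hV₁o, hV₂o, hKV₁, hKV₂, hVd⟩ :=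
    SeparatedNhds.of_isCompact_isCompact K₁.2 K₂.2 hd
  refine le_iInf₂ fun U hU => ?_
  have hU₁ : (K₁ : Set Z) ⊆ ((U ⊓ ⟨V₁, hV₁o⟩ : Opens Z) : Set Z) := by
    refine Set.subset_inter ?_ hKV₁
    exact (Set.subset_union_left).trans (by simpa [Compacts.coe_sup] using hU)
  have hU₂ : (K₂ : Set Z) ⊆ ((U ⊓ ⟨V₂, hV₂o⟩ : Opens Z) : Set Z) := by
    refine Set.subset_inter ?_ hKV₂
    exact (Set.subset_union_right).trans (by simpa [Compacts.coe_sup] using hU)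
  calc lamE 𝒰 π K₁ + lamE 𝒰 π K₂
      ≤ lim' 𝒰 (fun n => π n ((U : Set Z) ∩ V₁)) + lim' 𝒰 (fun n => π n ((U : Set Z) ∩ V₂)) :=
        add_le_add (lamE_le 𝒰 π hU₁) (lamE_le 𝒰 π hU₂)
    _ = lim' 𝒰 (fun n => π n ((U : Set Z) ∩ V₁) + π n ((U : Set Z) ∩ V₂)) :=
        (lim'_add 𝒰 _ _).symm
    _ ≤ lim' 𝒰 (fun n => π n (U : Set Z)) := by
        refine lim'_le_lim' 𝒰 fun n => ?_
        rw [← measure_union (hVd.mono inter_subset_right inter_subset_right)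
          ((U.isOpen.inter hV₂o).measurableSet)]
        exact measure_mono (Set.union_subset inter_subset_left inter_subset_left)

/-- The content associated to the ultrafilter limit of a sequence of probability measures. -/
def cont : Content Z where
  toFun K := (lamE 𝒰 π K).toNNReal
  mono' K₁ K₂ h :=
    ENNReal.toNNReal_mono (lamE_ne_top 𝒰 π hπ K₂) (lamE_mono 𝒰 π hπ h)
  sup_disjoint' K₁ K₂ hd _ _ := by
    show (lamE 𝒰 π (K₁ ⊔ K₂)).toNNReal
        = (lamE 𝒰 π K₁).toNNReal + (lamE 𝒰 π K₂).toNNReal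
    have h1 : lamE 𝒰 π (K₁ ⊔ K₂) = lamE 𝒰 π K₁ + lamE 𝒰 π K₂ :=
      le_antisymm (lamE_sup_le 𝒰 π hπ K₁ K₂) (le_lamE_sup_of_disjoint 𝒰 π hπ K₁ K₂ hd)
    rw [h1, ENNReal.toNNReal_add (lamE_ne_top 𝒰 π hπ K₁) (lamE_ne_top 𝒰 π hπ K₂)]
  sup_le' K₁ K₂ := by
    show (lamE 𝒰 π (K₁ ⊔ K₂)).toNNReal
        ≤ (lamE 𝒰 π K₁).toNNReal + (lamE 𝒰 π K₂).toNNReal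
    have h2 : (lamE 𝒰 π K₁ + lamE 𝒰 π K₂).toNNReal
        = (lamE 𝒰 π K₁).toNNReal + (lamE 𝒰 π K₂).toNNReal :=
      ENNReal.toNNReal_add (lamE_ne_top 𝒰 π hπ K₁) (lamE_ne_top 𝒰 π hπ K₂)
    calc (lamE 𝒰 π (K₁ ⊔ K₂)).toNNReal
        ≤ (lamE 𝒰 π K₁ + lamE 𝒰 π K₂).toNNReal :=
          ENNReal.toNNReal_mono
            (ENNReal.add_ne_top.mpr ⟨lamE_ne_top 𝒰 π hπ K₁, lamE_ne_top 𝒰 π hπ K₂⟩)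
            (lamE_sup_le 𝒰 π hπ K₁ K₂)
      _ = _ := h2

lemma cont_apply (K : Compacts Z) : (cont 𝒰 π hπ K : ℝ≥0∞) = lamE 𝒰 π K :=
  ENNReal.coe_toNNReal (lamE_ne_top 𝒰 π hπ K)

/-- The limit measure. -/
def om : Measure Z := (cont 𝒰 π hπ).measure

lemma om_open_le {U : Set Z} (hU : IsOpen U) :
    om 𝒰 π hπ U ≤ lim' 𝒰 (fun n => π n U) := by
  rw [om, Content.measure_apply _ hU.measurableSet,
    (cont 𝒰 π hπ).outerMeasure_of_isOpen U hU, Content.innerContent]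
  refine iSup₂_le fun K hK => ?_
  rw [cont_apply]
  exact lamE_le 𝒰 π (U := ⟨U, hU⟩) hK

lemma le_om_open {U : Set Z} (hU : IsOpen U) {K : Set Z} (hK : IsCompact K)
    (hKU : K ⊆ U) {r : ℝ≥0∞} (hr : ∀ n, r ≤ π n K) :
    r ≤ om 𝒰 π hπ U := by
  rw [om, Content.measure_apply _ hU.measurableSet,
    (cont 𝒰 π hπ).outerMeasure_of_isOpen U hU, Content.innerContent]
  refine le_trans ?_ (le_iSup₂ (⟨K, hK⟩ : Compacts Z) hKU)
  rw [cont_apply]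
  exact le_lamE 𝒰 π hr

end Content

section StepFun

variable (c : Z → ℝ≥0∞)

/-- Dyadic-free approximation of a function by finite suprema of multiples of
indicators of (open) superlevel sets. -/
def stepFun (s : Finset ℚ) (z : Z) : ℝ≥0∞ :=
  s.sup fun q => Set.indicator {w | ENNReal.ofReal q < c w} (fun _ => ENNReal.ofReal q) z

lemma stepFun_le (s : Finset ℚ) (z : Z) : stepFun c s z ≤ c z := by
  refine Finset.sup_le fun q _ => ?_
  by_cases hz : z ∈ {w | ENNReal.ofReal q < c w}
  · rw [Set.indicator_of_mem hz]
    exact (hz : _ < _).le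
  · rw [Set.indicator_of_notMem hz]
    exact zero_le

lemma iSup_stepFun (z : Z) : ⨆ s : Finset ℚ, stepFun c s z = c z := by
  refine le_antisymm (iSup_le fun s => stepFun_le c s z) (le_of_forall_lt fun r hr => ?_)
  obtain ⟨q, _hq0, hq1, hq2⟩ := ENNReal.lt_iff_exists_rat_btwn.mp hr
  have hval : (Real.toNNReal (q : ℝ) : ℝ≥0∞) = ENNReal.ofReal (q : ℝ) := rfl
  rw [hval] at hq1 hq2
  have hmem : z ∈ {w | ENNReal.ofReal (q : ℝ) < c w} := hq2
  have : stepFun c {q} z = ENNReal.ofReal (q : ℝ) := by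
    rw [stepFun, Finset.sup_singleton, Set.indicator_of_mem hmem]
  exact lt_of_lt_of_le hq1 (this ▸ le_iSup (fun s => stepFun c s z) ({q} : Finset ℚ))

lemma stepFun_measurable (hc : LowerSemicontinuous c) (s : Finset ℚ) :
    Measurable (stepFun c s) := by
  classical
  induction s using Finset.induction with
  | empty =>
    have : stepFun c ∅ = fun _ => 0 := funext fun z => by simp [stepFun]
    rw [this]
    exact measurable_const
  | @insert a s ha ih =>
    have hins : stepFun c (insert a s) = fun z =>
        Set.indicator {w | ENNReal.ofReal (a : ℝ) < c w}
          (fun _ => ENNReal.ofReal (a : ℝ)) z ⊔ stepFun c s z :=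
      funext fun z => Finset.sup_insert
    rw [hins]
    refine Measurable.sup ?_ ih
    exact Measurable.indicator measurable_const
      (hc.isOpen_preimage (ENNReal.ofReal (a : ℝ))).measurableSet

lemma stepFun_mono {s t : Finset ℚ} (h : s ⊆ t) (z : Z) :
    stepFun c s z ≤ stepFun c t z :=
  Finset.sup_mono h

lemma stepFun_insert {a : ℚ} {s : Finset ℚ} (hs : ∀ x ∈ s, x < a) :
    stepFun c (insert a s) = fun z =>
      stepFun c s z + Set.indicator {w | ENNReal.ofReal (a : ℝ) < c w}
        (fun _ => ENNReal.ofReal (a : ℝ) - s.sup (fun q => ENNReal.ofReal (q : ℝ))) z := by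
  classical
  funext z
  have hle : s.sup (fun q => ENNReal.ofReal (q : ℝ)) ≤ ENNReal.ofReal (a : ℝ) :=
    Finset.sup_le fun q hq => ENNReal.ofReal_le_ofReal (by exact_mod_cast (hs q hq).le)
  by_cases hz : z ∈ {w | ENNReal.ofReal (a : ℝ) < c w}
  · have hbranch : stepFun c s z = s.sup fun q => ENNReal.ofReal (q : ℝ) := by
      refine Finset.sup_congr rfl fun q hq => ?_
      refine Set.indicator_of_mem ?_ _
      exact lt_of_le_of_lt
        (ENNReal.ofReal_le_ofReal (by exact_mod_cast (hs q hq).le)) hz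
    have hL : stepFun c (insert a s) z = ENNReal.ofReal (a : ℝ) ⊔ stepFun c s z := by
      simp only [stepFun, Finset.sup_insert, Set.indicator_of_mem hz]
    rw [hL, hbranch, Set.indicator_of_mem hz, add_tsub_cancel_of_le hle]
    exact sup_eq_left.mpr hle
  · have hL : stepFun c (insert a s) z = 0 ⊔ stepFun c s z := by
      simp only [stepFun, Finset.sup_insert, Set.indicator_of_notMem hz]
    rw [hL, Set.indicator_of_notMem hz, add_zero]
    simp

end StepFun

section IntegralBound

variable (𝒰 : Ultrafilter ℕ) (π : ℕ → Measure Z) (hπ : ∀ n, IsProbabilityMeasure (π n))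

lemma lintegral_om_le {c : Z → ℝ≥0∞} (hc : LowerSemicontinuous c) :
    ∫⁻ z, c z ∂(om 𝒰 π hπ) ≤ lim' 𝒰 (fun n => ∫⁻ z, c z ∂(π n)) := by
  classical
  have hmeas := stepFun_measurable c hc
  have hdir : Directed (· ≤ ·) (fun s : Finset ℚ => stepFun c s) := fun s t =>
    ⟨s ∪ t, fun z => stepFun_mono c Finset.subset_union_left z,
      fun z => stepFun_mono c Finset.subset_union_right z⟩
  have hstep : ∀ s : Finset ℚ,
      ∫⁻ z, stepFun c s z ∂(om 𝒰 π hπ) ≤ lim' 𝒰 (fun n => ∫⁻ z, stepFun c s z ∂(π n)) := by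
    intro s
    induction s using Finset.induction_on_max with
    | empty =>
      simp only [stepFun, Finset.sup_empty]
      simp [lintegral_const]
    | insert a s hmax ih =>
      set δ : ℝ≥0∞ := ENNReal.ofReal (a : ℝ) - s.sup (fun q => ENNReal.ofReal (q : ℝ)) with hδ
      have hδtop : δ ≠ ∞ := (tsub_le_self.trans_lt ENNReal.ofReal_lt_top).ne
      have hUopen : IsOpen {w : Z | ENNReal.ofReal (a : ℝ) < c w} :=
        hc.isOpen_preimage _
      have hid := stepFun_insert c hmax
      have hint : ∀ (mm : Measure Z), ∫⁻ z, stepFun c (insert a s) z ∂mm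
          = ∫⁻ z, stepFun c s z ∂mm + δ * mm {w : Z | ENNReal.ofReal (a : ℝ) < c w} := by
        intro mm
        rw [hid, lintegral_add_left (hmeas s), lintegral_indicator_const hUopen.measurableSet]
      calc ∫⁻ z, stepFun c (insert a s) z ∂(om 𝒰 π hπ)
          = ∫⁻ z, stepFun c s z ∂(om 𝒰 π hπ)
              + δ * om 𝒰 π hπ {w : Z | ENNReal.ofReal (a : ℝ) < c w} := hint _
        _ ≤ lim' 𝒰 (fun n => ∫⁻ z, stepFun c s z ∂(π n))
              + δ * lim' 𝒰 (fun n => π n {w : Z | ENNReal.ofReal (a : ℝ) < c w}) :=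
            add_le_add ih (mul_le_mul' le_rfl (om_open_le 𝒰 π hπ hUopen))
        _ = lim' 𝒰 (fun n => ∫⁻ z, stepFun c s z ∂(π n)
              + δ * π n {w : Z | ENNReal.ofReal (a : ℝ) < c w}) := by
            rw [← lim'_const_mul 𝒰 hδtop, ← lim'_add]
        _ = lim' 𝒰 (fun n => ∫⁻ z, stepFun c (insert a s) z ∂(π n)) := by
            refine congrArg (lim' 𝒰) (funext fun n => ?_)
            rw [hint (π n)]
  have hrw : ∀ (mm : Measure Z), ∫⁻ z, c z ∂mm = ∫⁻ z, ⨆ s : Finset ℚ, stepFun c s z ∂mm := by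
    intro mm
    refine lintegral_congr fun z => ?_
    rw [iSup_stepFun]
  rw [hrw, lintegral_iSup_directed (fun s => (hmeas s).aemeasurable) hdir]
  refine iSup_le fun s => (hstep s).trans (lim'_le_lim' 𝒰 fun n => lintegral_mono (stepFun_le c s))

end IntegralBound

section Marginal

variable (𝒰 : Ultrafilter ℕ) (π : ℕ → Measure Z) (hπ : ∀ n, IsProbabilityMeasure (π n))

lemma map_om_eq {W : Type*} [TopologicalSpace W] [PolishSpace W] [MeasurableSpace W]
    [BorelSpace W] (p : Z → W) (hp : Continuous p) (m : Measure W) [IsProbabilityMeasure m]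
    (hmap : ∀ n, (π n).map p = m)
    (hlift : ∀ C : Set W, IsCompact C → ∀ ε : ℝ≥0∞, ε ≠ 0 →
      ∃ K : Set Z, IsCompact K ∧ K ⊆ p ⁻¹' C ∧ ∀ n, m C ≤ π n K + ε)
    (hprob : IsProbabilityMeasure (om 𝒰 π hπ)) :
    (om 𝒰 π hπ).map p = m := by
  haveI := hprob
  haveI : IsProbabilityMeasure ((om 𝒰 π hπ).map p) :=
    Measure.isProbabilityMeasure_map hp.measurable.aemeasurable
  refine ext_of_generate_finite {s : Set W | IsOpen s} ?_ isPiSystem_isOpen ?_ ?_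
  · exact BorelSpace.measurable_eq
  · intro U hU
    rw [Measure.map_apply hp.measurable hU.measurableSet]
    have hpre : ∀ n, π n (p ⁻¹' U) = m U := fun n => by
      rw [← hmap n, Measure.map_apply hp.measurable hU.measurableSet]
    refine le_antisymm ?_ ?_
    · calc om 𝒰 π hπ (p ⁻¹' U) ≤ lim' 𝒰 (fun n => π n (p ⁻¹' U)) :=
            om_open_le 𝒰 π hπ (hU.preimage hp)
        _ = m U := by simp only [hpre]; exact lim'_const 𝒰 _
    · refine ENNReal.le_of_forall_pos_le_add fun ε hε hfin => ?_
      set ε3 : ℝ≥0∞ := (ε : ℝ≥0∞) / 3 with hε3def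
      have hε3 : ε3 ≠ 0 := by
        simp [hε3def, ENNReal.div_eq_zero_iff, hε.ne']
      have hε3sum : ε3 + ε3 + ε3 = (ε : ℝ≥0∞) := ENNReal.add_thirds _
      by_cases htriv : m U ≤ ε3
      · refine htriv.trans (le_trans ?_ le_add_self)
        rw [← hε3sum]
        exact le_add_self
      · -- find a closed subset of U with almost full measure
        have hlt : m U - ε3 < m U :=
          ENNReal.sub_lt_self (measure_ne_top _ _)
            (fun h0 => htriv (by simp [h0])) hε3
        obtain ⟨F, hFU, hFc, hFlt⟩ := hU.exists_lt_isClosed hlt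
        -- tightness for m
        obtain ⟨T, hTc, hTle⟩ := exists_compact_compl_le m hε3
        set C : Set W := F ∩ T with hCdef
        have hCc : IsCompact C := hTc.inter_left hFc
        have hCU : C ⊆ U := inter_subset_left.trans hFU
        have hmC : m U ≤ m C + ε3 + ε3 := by
          have h1 : m F ≤ m C + ε3 := by
            calc m F ≤ m (C ∪ Tᶜ) := measure_mono (fun x hx => by
                  by_cases hxT : x ∈ T
                  · exact Or.inl ⟨hx, hxT⟩
                  · exact Or.inr hxT)
              _ ≤ m C + m Tᶜ := measure_union_le _ _
              _ ≤ m C + ε3 := add_le_add_right hTle _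
          have h2 : m U ≤ m F + ε3 := tsub_le_iff_right.mp hFlt.le
          calc m U ≤ m F + ε3 := h2
            _ ≤ m C + ε3 + ε3 := add_le_add_left h1 _
        obtain ⟨K, hKc, hKsub, hKle⟩ := hlift C hCc ε3 hε3
        have hKU : K ⊆ p ⁻¹' U := hKsub.trans (preimage_mono hCU)
        have hr : ∀ n, m C - ε3 ≤ π n K := fun n => tsub_le_iff_right.mpr (hKle n)
        have hom : m C - ε3 ≤ om 𝒰 π hπ (p ⁻¹' U) :=
          le_om_open 𝒰 π hπ (hU.preimage hp) hKc hKU hr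
        calc m U ≤ m C + ε3 + ε3 := hmC
          _ ≤ ((m C - ε3) + ε3) + ε3 + ε3 := by
              refine add_le_add_left (add_le_add_left ?_ _) _
              exact le_tsub_add
          _ ≤ om 𝒰 π hπ (p ⁻¹' U) + ε3 + ε3 + ε3 := by
              exact add_le_add_left (add_le_add_left (add_le_add_left hom _) _) _
          _ = om 𝒰 π hπ (p ⁻¹' U) + (ε3 + ε3 + ε3) := by abel
          _ = om 𝒰 π hπ (p ⁻¹' U) + ε := by rw [hε3sum]
  · rw [Measure.map_apply hp.measurable MeasurableSet.univ]
    simp [measure_univ]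

end Marginal

end

end OTAux

open OTAux Filter Set Topology

/-- **Existence of an optimal transport plan.** For Polish spaces `X`, `Y`, Borel probability
measures `μ`, `ν`, and a lower semicontinuous cost `c : X × Y → [0,∞]`, the infimum of
`∫ c dπ` over transport plans `π` with first marginal `μ` and second marginal `ν`
is attained by some plan `π*`. -/
theorem exists_optimal_transport_plan
    {X Y : Type*} [TopologicalSpace X] [PolishSpace X] [MeasurableSpace X] [BorelSpace X]
    [TopologicalSpace Y] [PolishSpace Y] [MeasurableSpace Y] [BorelSpace Y]
    (μ : Measure X) (ν : Measure Y) [IsProbabilityMeasure μ] [IsProbabilityMeasure ν]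
    (c : X × Y → ℝ≥0∞) (hc : LowerSemicontinuous c) :
    ∃ π : Measure (X × Y), IsProbabilityMeasure π ∧
      π.map Prod.fst = μ ∧ π.map Prod.snd = ν ∧
      ∫⁻ p, c p ∂π =
        ⨅ (π' : Measure (X × Y)) (_ : IsProbabilityMeasure π')
          (_ : π'.map Prod.fst = μ) (_ : π'.map Prod.snd = ν),
          ∫⁻ p, c p ∂π' := by
  classical
  set I : ℝ≥0∞ := ⨅ (π' : Measure (X × Y)) (_ : IsProbabilityMeasure π')
      (_ : π'.map Prod.fst = μ) (_ : π'.map Prod.snd = ν), ∫⁻ p, c p ∂π' with hI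
  -- the product coupling
  have hprod_fst : (μ.prod ν).map Prod.fst = μ := by
    rw [Measure.map_fst_prod]; simp
  have hprod_snd : (μ.prod ν).map Prod.snd = ν := by
    rw [Measure.map_snd_prod]; simp
  have hIle' : ∀ (π' : Measure (X × Y)), IsProbabilityMeasure π' →
      π'.map Prod.fst = μ → π'.map Prod.snd = ν → I ≤ ∫⁻ p, c p ∂π' := by
    intro π' h1 h2 h3
    rw [hI]
    refine iInf_le_of_le π' ?_
    rw [iInf_pos h1, iInf_pos h2, iInf_pos h3]
  have hIle : I ≤ ∫⁻ p, c p ∂(μ.prod ν) :=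
    hIle' (μ.prod ν) inferInstance hprod_fst hprod_snd
  by_cases hItop : I = ∞
  · refine ⟨μ.prod ν, inferInstance, hprod_fst, hprod_snd, ?_⟩
    exact le_antisymm (by rw [hItop]; exact le_top) hIle
  -- minimizing sequence
  have hseq : ∀ n : ℕ, ∃ π' : Measure (X × Y), IsProbabilityMeasure π' ∧
      π'.map Prod.fst = μ ∧ π'.map Prod.snd = ν ∧
      ∫⁻ p, c p ∂π' ≤ I + ((n : ℝ≥0∞) + 1)⁻¹ := by
    intro n
    have hlt : I < I + ((n : ℝ≥0∞) + 1)⁻¹ := by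
      refine ENNReal.lt_add_right hItop ?_
      rw [Ne, ENNReal.inv_eq_zero]
      exact ENNReal.add_ne_top.mpr ⟨ENNReal.natCast_ne_top n, ENNReal.one_ne_top⟩
    rw [hI, iInf_lt_iff] at hlt
    obtain ⟨π', hπ'⟩ := hlt
    rw [iInf_lt_iff] at hπ'
    obtain ⟨h1, hπ'⟩ := hπ'
    rw [iInf_lt_iff] at hπ'
    obtain ⟨h2, hπ'⟩ := hπ'
    rw [iInf_lt_iff] at hπ'
    obtain ⟨h3, hπ'⟩ := hπ'
    exact ⟨π', h1, h2, h3, hπ'.le⟩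
  choose πs hπs hfst hsnd hval using hseq
  set 𝒰 : Ultrafilter ℕ := Ultrafilter.of (atTop : Filter ℕ) with h𝒰def
  have h𝒰 : (𝒰 : Filter ℕ) ≤ atTop := Ultrafilter.of_le _
  set ω : Measure (X × Y) := om 𝒰 πs hπs with hω
  -- ω is a probability measure
  have hω_le_one : ω univ ≤ 1 := by
    calc ω univ ≤ lim' 𝒰 (fun n => πs n univ) := om_open_le 𝒰 πs hπs isOpen_univ
      _ = 1 := by
        have : ∀ n, πs n (univ : Set (X × Y)) = 1 := fun n => (hπs n).measure_univ
        simp only [this]; exact lim'_const 𝒰 1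
  have hπs_pre_fst : ∀ n (s : Set X), MeasurableSet s → πs n (Prod.fst ⁻¹' s) = μ s := by
    intro n s hs
    rw [← hfst n, Measure.map_apply measurable_fst hs]
  have hπs_pre_snd : ∀ n (s : Set Y), MeasurableSet s → πs n (Prod.snd ⁻¹' s) = ν s := by
    intro n s hs
    rw [← hsnd n, Measure.map_apply measurable_snd hs]
  have hω_ge_one : (1 : ℝ≥0∞) ≤ ω univ := by
    refine ENNReal.le_of_forall_pos_le_add fun ε hε hfin => ?_
    have hε2 : ((ε : ℝ≥0∞) / 2) ≠ 0 := by
      simp [ENNReal.div_eq_zero_iff, hε.ne']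
    obtain ⟨Kx, hKxc, hKxle⟩ := exists_compact_compl_le μ hε2
    obtain ⟨Ky, hKyc, hKyle⟩ := exists_compact_compl_le ν hε2
    have hKc : IsCompact (Kx ×ˢ Ky) := hKxc.prod hKyc
    have hbound : ∀ n, (1 : ℝ≥0∞) - ε ≤ πs n (Kx ×ˢ Ky) := by
      intro n
      rw [tsub_le_iff_right]
      have hcompl : ((Kx ×ˢ Ky)ᶜ : Set (X × Y)) ⊆ (Prod.fst ⁻¹' Kxᶜ) ∪ (Prod.snd ⁻¹' Kyᶜ) := by
        intro z hz
        by_cases hx : z.1 ∈ Kx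
        · exact Or.inr fun hy => hz ⟨hx, hy⟩
        · exact Or.inl hx
      have h1 : πs n ((Kx ×ˢ Ky)ᶜ) ≤ ε := by
        calc πs n ((Kx ×ˢ Ky)ᶜ) ≤ πs n (Prod.fst ⁻¹' Kxᶜ) + πs n (Prod.snd ⁻¹' Kyᶜ) :=
              (measure_mono hcompl).trans (measure_union_le _ _)
          _ = μ Kxᶜ + ν Kyᶜ := by
              rw [hπs_pre_fst n _ hKxc.isClosed.measurableSet.compl,
                hπs_pre_snd n _ hKyc.isClosed.measurableSet.compl]
          _ ≤ ε / 2 + ε / 2 := add_le_add hKxle hKyle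
          _ = ε := ENNReal.add_halves _
      calc (1 : ℝ≥0∞) = πs n (Kx ×ˢ Ky) + πs n ((Kx ×ˢ Ky)ᶜ) := by
            rw [measure_add_measure_compl (hKc.isClosed.measurableSet)]
            exact ((hπs n).measure_univ).symm
        _ ≤ πs n (Kx ×ˢ Ky) + ε := add_le_add_right h1 _
    rcases le_total (ε : ℝ≥0∞) 1 with h | h
    · calc (1 : ℝ≥0∞) = (1 - ε) + ε := (tsub_add_cancel_of_le h).symm
        _ ≤ ω univ + ε := add_le_add_left
            (le_om_open 𝒰 πs hπs isOpen_univ hKc (subset_univ _) hbound) _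
    · exact h.trans le_add_self
  have hωprob : IsProbabilityMeasure ω := ⟨le_antisymm hω_le_one hω_ge_one⟩
  -- marginals
  have hωfst : ω.map Prod.fst = μ := by
    refine map_om_eq 𝒰 πs hπs Prod.fst continuous_fst μ hfst ?_ hωprob
    intro C hCc ε hε
    obtain ⟨Ky, hKyc, hKyle⟩ := exists_compact_compl_le ν hε
    refine ⟨C ×ˢ Ky, hCc.prod hKyc, fun z hz => hz.1, fun n => ?_⟩
    have hsub : (Prod.fst ⁻¹' C : Set (X × Y)) ⊆ (C ×ˢ Ky) ∪ (Prod.snd ⁻¹' Kyᶜ) := by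
      intro z hz
      by_cases hy : z.2 ∈ Ky
      · exact Or.inl ⟨hz, hy⟩
      · exact Or.inr hy
    calc μ C = πs n (Prod.fst ⁻¹' C) := (hπs_pre_fst n C hCc.isClosed.measurableSet).symm
      _ ≤ πs n (C ×ˢ Ky) + πs n (Prod.snd ⁻¹' Kyᶜ) :=
          (measure_mono hsub).trans (measure_union_le _ _)
      _ = πs n (C ×ˢ Ky) + ν Kyᶜ := by
          rw [hπs_pre_snd n _ hKyc.isClosed.measurableSet.compl]
      _ ≤ πs n (C ×ˢ Ky) + ε := add_le_add_right hKyle _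
  have hωsnd : ω.map Prod.snd = ν := by
    refine map_om_eq 𝒰 πs hπs Prod.snd continuous_snd ν hsnd ?_ hωprob
    intro C hCc ε hε
    obtain ⟨Kx, hKxc, hKxle⟩ := exists_compact_compl_le μ hε
    refine ⟨Kx ×ˢ C, hKxc.prod hCc, fun z hz => hz.2, fun n => ?_⟩
    have hsub : (Prod.snd ⁻¹' C : Set (X × Y)) ⊆ (Kx ×ˢ C) ∪ (Prod.fst ⁻¹' Kxᶜ) := by
      intro z hz
      by_cases hx : z.1 ∈ Kx
      · exact Or.inl ⟨hx, hz⟩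
      · exact Or.inr hx
    calc ν C = πs n (Prod.snd ⁻¹' C) := (hπs_pre_snd n C hCc.isClosed.measurableSet).symm
      _ ≤ πs n (Kx ×ˢ C) + πs n (Prod.fst ⁻¹' Kxᶜ) :=
          (measure_mono hsub).trans (measure_union_le _ _)
      _ = πs n (Kx ×ˢ C) + μ Kxᶜ := by
          rw [hπs_pre_fst n _ hKxc.isClosed.measurableSet.compl]
      _ ≤ πs n (Kx ×ˢ C) + ε := add_le_add_right hKxle _
  -- the value
  have hlimle : lim' 𝒰 (fun n => ∫⁻ p, c p ∂(πs n)) ≤ I := by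
    refine ENNReal.le_of_forall_pos_le_add fun ε hε hfin => ?_
    obtain ⟨N, hNlt⟩ := ENNReal.exists_inv_nat_lt (show (ε : ℝ≥0∞) ≠ 0 by
      simpa using hε.ne')
    have hev : ∀ᶠ n in atTop, (fun n => ∫⁻ p, c p ∂(πs n)) n ≤ I + ε := by
      filter_upwards [eventually_ge_atTop N] with n hn
      refine (hval n).trans (add_le_add_right ?_ _)
      calc ((n : ℝ≥0∞) + 1)⁻¹ ≤ ((N : ℝ≥0∞))⁻¹ := by
            refine ENNReal.inv_le_inv.mpr ?_
            calc (N : ℝ≥0∞) ≤ (n : ℝ≥0∞) := by exact_mod_cast hn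
              _ ≤ (n : ℝ≥0∞) + 1 := le_add_right le_rfl
        _ ≤ ε := hNlt.le
    exact lim'_le_of_eventually 𝒰 (hev.filter_mono h𝒰)
  have hωle : ∫⁻ p, c p ∂ω ≤ I :=
    (lintegral_om_le 𝒰 πs hπs hc).trans hlimle
  have hωge : I ≤ ∫⁻ p, c p ∂ω := hIle' ω hωprob hωfst hωsnd
  exact ⟨ω, hωprob, hωfst, hωsnd, le_antisymm hωle hωge⟩
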